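/- Let G be a signed graph with a weakly balanced partition into clusters, with positive and negative adjacency matrices Â⁺ and Â⁻. Then for any m⁺ ≥ 1, the (i,j) entry of (Â⁺)^{m⁺} is nonzero only if i and j belong to the same cluster; and for any m⁻ ≥ 0, the (i,j) entry of ∑_{a=0}^{m⁻} (Â⁺)^a Â⁻ (Â⁺)^{m⁻−a} is nonzero only if i and j belong to different clusters. Hence Density-based Augmentation preserves weak balance. -/

import Mathlib

open Matrix BigOperators

theorem density_augmentation_preserves_weak_balance {n K : ℕ}
    (Ap Am : Matrix (Fin n) (Fin n) ℝ) (c : Fin n → Fin K)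
    (hAp01 : ∀ i j, Ap i j = 0 ∨ Ap i j = 1)
    (hAm01 : ∀ i j, Am i j = 0 ∨ Am i j = 1)
    (hApc : ∀ i j, Ap i j ≠ 0 → c i = c j)
    (hAmc : ∀ i j, Am i j ≠ 0 → c i ≠ c j) :
    (∀ m : ℕ, 1 ≤ m → ∀ i j, (Ap ^ m) i j ≠ 0 → c i = c j) ∧
    (∀ m : ℕ, ∀ i j,
      (∑ a ∈ Finset.range (m + 1), Ap ^ a * Am * Ap ^ (m - a)) i j ≠ 0 → c i ≠ c j) := by
  have key : ∀ m : ℕ, ∀ i j, (Ap ^ m) i j ≠ 0 → c i = c j := by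
    intro m
    induction m with
    | zero =>
      intro i j h
      simp only [pow_zero, Matrix.one_apply] at h
      by_cases hij : i = j
      · rw [hij]
      · simp [hij] at h
    | succ m ih =>
      intro i j h
      rw [pow_succ, Matrix.mul_apply] at h
      obtain ⟨k, hk⟩ := Finset.exists_ne_zero_of_sum_ne_zero h
      have h1 : (Ap ^ m) i k ≠ 0 := fun hz => hk.2 (by rw [hz, zero_mul])
      have h2 : Ap k j ≠ 0 := fun hz => hk.2 (by rw [hz, mul_zero])
      exact (ih i k h1).trans (hApc k j h2)
  refine ⟨fun m _ => key m, fun m i j h => ?_⟩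
  rw [Matrix.sum_apply] at h
  obtain ⟨a, ha⟩ := Finset.exists_ne_zero_of_sum_ne_zero h
  have h' := ha.2
  rw [Matrix.mul_apply] at h'
  obtain ⟨l, hl⟩ := Finset.exists_ne_zero_of_sum_ne_zero h'
  have h1 : (Ap ^ a * Am) i l ≠ 0 := fun hz => hl.2 (by rw [hz, zero_mul])
  have h2 : (Ap ^ (m - a)) l j ≠ 0 := fun hz => hl.2 (by rw [hz, mul_zero])
  rw [Matrix.mul_apply] at h1
  obtain ⟨k, hk⟩ := Finset.exists_ne_zero_of_sum_ne_zero h1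
  have h3 : (Ap ^ a) i k ≠ 0 := fun hz => hk.2 (by rw [hz, zero_mul])
  have h4 : Am k l ≠ 0 := fun hz => hk.2 (by rw [hz, mul_zero])
  rw [key a i k h3, ← key (m - a) l j h2]
  exact hAmc k l h4
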